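/- Every comparator circuit with ℓ > 0 wires has an equivalent comparator circuit (computing the same Boolean function) with ℓ wires and at most ℓ·(ℓ−1)/2 gates. -/

import Mathlib

/-- A comparator circuit on `n` Boolean variables with `ℓ` wires.
Each wire is labelled by a literal: a pair `(i, neg)` meaning the variable `x_i`
if `neg = false` and its negation `¬x_i` if `neg = true`.  Each gate is an ordered
pair of distinct wires `(w, w')`: applying it, `w` receives the conjunction of the
two held values and `w'` receives their disjunction.  A designated output wire
carries the result of the computation. -/
structure CompCircuit (n ℓ : ℕ) where
  label : Fin ℓ → Fin n × Bool
  gates : List (Fin ℓ × Fin ℓ)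
  distinct : ∀ g ∈ gates, g.1 ≠ g.2
  out : Fin ℓ

namespace CompCircuit

variable {n ℓ : ℕ}

/-- Value of the literal `(i, neg)` on input `x`. -/
def litVal (x : Fin n → Bool) (p : Fin n × Bool) : Bool :=
  if p.2 then !(x p.1) else x p.1

/-- Applying a comparator gate to the current wire values. -/
def applyGate (g : Fin ℓ × Fin ℓ) (v : Fin ℓ → Bool) : Fin ℓ → Bool :=
  fun w => if w = g.1 then v g.1 && v g.2 else if w = g.2 then v g.1 || v g.2 else v w

/-- Initial wire values on input `x`: each wire holds the value of its literal. -/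
def init (C : CompCircuit n ℓ) (x : Fin n → Bool) : Fin ℓ → Bool :=
  fun w => litVal x (C.label w)

/-- Wire values after all the gates have been applied in order. -/
def run (C : CompCircuit n ℓ) (x : Fin n → Bool) : Fin ℓ → Bool :=
  C.gates.foldl (fun v g => applyGate g v) (C.init x)

/-- The output of the circuit: the final value of the output wire. -/
def eval (C : CompCircuit n ℓ) (x : Fin n → Bool) : Bool :=
  C.run x C.out

/-- Wire values after the first `t` gates have been applied (i.e. just before gate `t`). -/
def stateAfter (C : CompCircuit n ℓ) (x : Fin n → Bool) (t : ℕ) : Fin ℓ → Bool :=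
  (C.gates.take t).foldl (fun v g => applyGate g v) (C.init x)

/-- The pair `(u_g(x), v_g(x))` of in-values of gate number `i` on input `x`. -/
def gateIn (C : CompCircuit n ℓ) (x : Fin n → Bool) (i : Fin C.gates.length) : Bool × Bool :=
  (C.stateAfter x i (C.gates.get i).1, C.stateAfter x i (C.gates.get i).2)

/-- Gate `i` is TYPE-1 useless: its in-values never form the pair `(1,0)`,
i.e. they always lie in `{(0,1),(0,0),(1,1)}`. -/
def Type1UselessAt (C : CompCircuit n ℓ) (i : Fin C.gates.length) : Prop :=
  ∀ x : Fin n → Bool, C.gateIn x i ≠ (true, false)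

/-- Gate `i` is TYPE-2 useless: its in-values never form the pair `(0,1)`,
i.e. they always lie in `{(1,0),(0,0),(1,1)}`. -/
def Type2UselessAt (C : CompCircuit n ℓ) (i : Fin C.gates.length) : Prop :=
  ∀ x : Fin n → Bool, C.gateIn x i ≠ (false, true)

/-- Gate `i` is useless if it is TYPE-1 or TYPE-2 useless. -/
def UselessAt (C : CompCircuit n ℓ) (i : Fin C.gates.length) : Prop :=
  C.Type1UselessAt i ∨ C.Type2UselessAt i

end CompCircuit



namespace CCProof

variable {α : Type*}

def ple (f g : α → Bool) : Prop := ∀ x, f x = true → g x = true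

def Cmp (f g : α → Bool) : Prop := ple f g ∨ ple g f

lemma Cmp.symm' {f g : α → Bool} (h : Cmp f g) : Cmp g f := h.elim Or.inr Or.inl

def fand (f g : α → Bool) : α → Bool := fun x => f x && g x
def for' (f g : α → Bool) : α → Bool := fun x => f x || g x

lemma cmp_fand_for' (A B : α → Bool) : Cmp (fand A B) (for' A B) :=
  Or.inl (fun x h => by simp only [fand, for'] at h ⊢; simp at h; simp [h.1])

lemma L2and {c A B : α → Bool} (h1 : Cmp c A) (h2 : Cmp c B) : Cmp c (fand A B) := by
  rcases h1 with h1 | h1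
  · rcases h2 with h2 | h2
    · exact Or.inl fun x hx => by simp [fand, h1 x hx, h2 x hx]
    · exact Or.inr fun x hx => by
        simp only [fand, Bool.and_eq_true] at hx; exact h2 x hx.2
  · exact Or.inr fun x hx => by
      simp only [fand, Bool.and_eq_true] at hx; exact h1 x hx.1

lemma L2or {c A B : α → Bool} (h1 : Cmp c A) (h2 : Cmp c B) : Cmp c (for' A B) := by
  rcases h1 with h1 | h1
  · exact Or.inl fun x hx => by simp [for', h1 x hx]
  · rcases h2 with h2 | h2
    · exact Or.inl fun x hx => by simp [for', h2 x hx]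
    · exact Or.inr fun x hx => by
        simp only [for', Bool.or_eq_true] at hx
        rcases hx with hx | hx
        · exact h1 x hx
        · exact h2 x hx

lemma splitA {c A B : α → Bool} (h : Cmp c A) :
    Cmp c (fand A B) ∨ Cmp c (for' A B) := by
  rcases h with h | h
  · exact Or.inr (Or.inl fun x hx => by simp [for', h x hx])
  · exact Or.inl (Or.inr fun x hx => by
      simp only [fand, Bool.and_eq_true] at hx; exact h x hx.1)

lemma splitB {c A B : α → Bool} (h : Cmp c B) :
    Cmp c (fand A B) ∨ Cmp c (for' A B) := by
  rcases h with h | h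
  · exact Or.inr (Or.inl fun x hx => by simp [for', h x hx])
  · exact Or.inl (Or.inr fun x hx => by
      simp only [fand, Bool.and_eq_true] at hx; exact h x hx.2)

open Classical in
noncomputable def eset {ℓ : ℕ} (F : Fin ℓ → α → Bool) : Finset (Fin ℓ × Fin ℓ) :=
  Finset.univ.filter (fun p => p.1 ≠ p.2 ∧ Cmp (F p.1) (F p.2))

lemma mem_eset {ℓ : ℕ} {F : Fin ℓ → α → Bool} {p : Fin ℓ × Fin ℓ} :
    p ∈ eset F ↔ p.1 ≠ p.2 ∧ Cmp (F p.1) (F p.2) := by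
  unfold eset; simp [Finset.mem_filter]

noncomputable def phi {ℓ : ℕ} (F : Fin ℓ → α → Bool) : ℕ := (eset F).card

lemma phi_le {ℓ : ℕ} (F : Fin ℓ → α → Bool) : phi F ≤ ℓ * (ℓ - 1) := by
  classical
  have hsub : eset F ⊆ (Finset.univ : Finset (Fin ℓ)).offDiag := by
    intro p hp
    rw [mem_eset] at hp
    exact Finset.mem_offDiag.2 ⟨Finset.mem_univ _, Finset.mem_univ _, hp.1⟩
  have h1 : phi F ≤ ((Finset.univ : Finset (Fin ℓ)).offDiag).card :=
    Finset.card_le_card hsub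
  rw [Finset.offDiag_card, Finset.card_univ, Fintype.card_fin] at h1
  have : ℓ * ℓ - ℓ = ℓ * (ℓ - 1) := by
    cases ℓ with
    | zero => rfl
    | succ k => rw [Nat.succ_sub_one, Nat.mul_succ]; omega
  omega

section Step

variable {ℓ : ℕ}

open Classical in
noncomputable def mEnd (F : Fin ℓ → α → Bool) (a b : Fin ℓ) (c e : Fin ℓ) : Fin ℓ :=
  if e = a then (if Cmp (F c) (fand (F a) (F b)) then a else b)
  else if e = b then (if Cmp (F c) (for' (F a) (F b)) then b else a)
  else e

lemma mEnd_S (F : Fin ℓ → α → Bool) (a b c e : Fin ℓ) (h : e = a ∨ e = b) :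
    mEnd F a b c e = a ∨ mEnd F a b c e = b := by
  unfold mEnd; split_ifs <;> tauto

lemma mEnd_id (F : Fin ℓ → α → Bool) (a b c e : Fin ℓ) (h1 : e ≠ a) (h2 : e ≠ b) :
    mEnd F a b c e = e := by
  unfold mEnd; rw [if_neg h1, if_neg h2]

lemma mEnd_cmp (F F' : Fin ℓ → α → Bool) (a b : Fin ℓ) (hab : a ≠ b)
    (hFa : F' a = fand (F a) (F b)) (hFb : F' b = for' (F a) (F b))
    (c e : Fin ℓ) (he : e = a ∨ e = b) (h : Cmp (F c) (F e)) :
    Cmp (F c) (F' (mEnd F a b c e)) := by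
  rcases he with rfl | rfl
  · unfold mEnd
    rw [if_pos rfl]
    split_ifs with h2
    · rw [hFa]; exact h2
    · rw [hFb]
      rcases splitA (B := F b) h with h3 | h3
      · exact absurd h3 h2
      · exact h3
  · unfold mEnd
    rw [if_neg (Ne.symm hab), if_pos rfl]
    split_ifs with h2
    · rw [hFb]; exact h2
    · rw [hFa]
      rcases splitB (A := F a) h with h3 | h3
      · exact h3
      · exact absurd h3 h2

lemma mEnd_both (F : Fin ℓ → α → Bool) (a b c : Fin ℓ) (hab : a ≠ b)
    (h1 : Cmp (F c) (F a)) (h2 : Cmp (F c) (F b)) :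
    mEnd F a b c a = a ∧ mEnd F a b c b = b := by
  constructor
  · unfold mEnd
    rw [if_pos rfl, if_pos (L2and h1 h2)]
  · unfold mEnd
    rw [if_neg (Ne.symm hab), if_pos rfl, if_pos (L2or h1 h2)]

lemma mEnd_ne (F : Fin ℓ → α → Bool) (a b c e e' : Fin ℓ) (hab : a ≠ b)
    (he : e = a ∨ e = b) (he' : e' = a ∨ e' = b) (hee : e ≠ e')
    (h1 : Cmp (F c) (F e)) (h2 : Cmp (F c) (F e')) :
    mEnd F a b c e ≠ mEnd F a b c e' := by
  have hca : Cmp (F c) (F a) := by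
    rcases he with rfl | rfl
    · exact h1
    · rcases he' with rfl | rfl
      · exact h2
      · exact absurd rfl hee
  have hcb : Cmp (F c) (F b) := by
    rcases he with rfl | rfl
    · rcases he' with rfl | rfl
      · exact absurd rfl hee
      · exact h2
    · exact h1
  obtain ⟨ha', hb'⟩ := mEnd_both F a b c hab hca hcb
  rcases he with rfl | rfl <;> rcases he' with rfl | rfl
  · exact absurd rfl hee
  · rw [ha', hb']; exact hab
  · rw [ha', hb']; exact hab.symm
  · exact absurd rfl hee

open Classical in
noncomputable def theta (F : Fin ℓ → α → Bool) (a b : Fin ℓ) (p : Fin ℓ × Fin ℓ) :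
    Fin ℓ × Fin ℓ :=
  if (p.1 = a ∨ p.1 = b) ∧ (p.2 = a ∨ p.2 = b) then p
  else (mEnd F a b p.2 p.1, mEnd F a b p.1 p.2)

lemma not_diag_of_mem {F : Fin ℓ → α → Bool} {a b : Fin ℓ}
    (hinc : ¬ Cmp (F a) (F b)) {p : Fin ℓ × Fin ℓ} (hp : p ∈ eset F) :
    ¬((p.1 = a ∨ p.1 = b) ∧ (p.2 = a ∨ p.2 = b)) := by
  rw [mem_eset] at hp
  rintro ⟨h1 | h1, h2 | h2⟩
  · exact hp.1 (h1.trans h2.symm)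
  · rw [h1, h2] at hp; exact hinc hp.2
  · rw [h1, h2] at hp; exact hinc hp.2.symm'
  · exact hp.1 (h1.trans h2.symm)

lemma phi_step (F F' : Fin ℓ → α → Bool) (a b : Fin ℓ) (hab : a ≠ b)
    (hFa : F' a = fand (F a) (F b)) (hFb : F' b = for' (F a) (F b))
    (hFc : ∀ c, c ≠ a → c ≠ b → F' c = F c)
    (hinc : ¬ Cmp (F a) (F b)) :
    phi F + 2 ≤ phi F' := by
  classical
  set D : Finset (Fin ℓ × Fin ℓ) := insert (a, b) (insert (b, a) (eset F)) with hD
  -- the image of an off-diagonal element keeps non-{a,b} ends fixed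
  have habne : ((a, b) : Fin ℓ × Fin ℓ) ≠ (b, a) := by
    intro h
    exact hab (congrArg Prod.fst h)
  have habE : ((a, b) : Fin ℓ × Fin ℓ) ∉ eset F := by
    rw [mem_eset]; rintro ⟨-, h⟩; exact hinc h
  have hbaE : ((b, a) : Fin ℓ × Fin ℓ) ∉ eset F := by
    rw [mem_eset]; rintro ⟨-, h⟩; exact hinc h.symm'
  have hcard : D.card = phi F + 2 := by
    rw [hD, Finset.card_insert_of_notMem, Finset.card_insert_of_notMem hbaE]
    · rfl
    · simp only [Finset.mem_insert]
      rintro (h | h)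
      · exact habne h
      · exact habE h
  -- mapping property
  have htheta_ab : theta F a b (a, b) = (a, b) := by
    unfold theta
    rw [if_pos ⟨Or.inl rfl, Or.inr rfl⟩]
  have htheta_ba : theta F a b (b, a) = (b, a) := by
    unfold theta
    rw [if_pos ⟨Or.inr rfl, Or.inl rfl⟩]
  have hmaps : ∀ p ∈ D, theta F a b p ∈ eset F' := by
    intro p hp
    rw [hD, Finset.mem_insert, Finset.mem_insert] at hp
    rcases hp with rfl | rfl | hp
    · rw [htheta_ab, mem_eset]
      exact ⟨hab, by rw [hFa, hFb]; exact cmp_fand_for' _ _⟩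
    · rw [htheta_ba, mem_eset]
      exact ⟨hab.symm, by rw [hFa, hFb]; exact (cmp_fand_for' _ _).symm'⟩
    · have hnd := not_diag_of_mem hinc hp
      rw [mem_eset] at hp
      obtain ⟨hne, hcmp⟩ := hp
      have hθ : theta F a b p = (mEnd F a b p.2 p.1, mEnd F a b p.1 p.2) := by
        unfold theta; rw [if_neg hnd]
      rw [hθ, mem_eset]
      by_cases h1 : p.1 = a ∨ p.1 = b
      · have h2 : ¬(p.2 = a ∨ p.2 = b) := fun h => hnd ⟨h1, h⟩
        push_neg at h2
        have hid : mEnd F a b p.1 p.2 = p.2 := mEnd_id _ _ _ _ _ h2.1 h2.2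
        have hS := mEnd_S F a b p.2 p.1 h1
        constructor
        · rw [hid]
          rcases hS with h | h <;> rw [h]
          · exact fun hh => h2.1 hh.symm
          · exact fun hh => h2.2 hh.symm
        · rw [hid, hFc p.2 h2.1 h2.2]
          exact (mEnd_cmp F F' a b hab hFa hFb p.2 p.1 h1 hcmp.symm').symm'
      · push_neg at h1
        have hid : mEnd F a b p.2 p.1 = p.1 := mEnd_id _ _ _ _ _ h1.1 h1.2
        rw [hid, hFc p.1 h1.1 h1.2]
        by_cases h2 : p.2 = a ∨ p.2 = b
        · have hS := mEnd_S F a b p.1 p.2 h2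
          constructor
          · rcases hS with h | h <;> rw [h]
            · exact h1.1
            · exact h1.2
          · exact mEnd_cmp F F' a b hab hFa hFb p.1 p.2 h2 hcmp
        · push_neg at h2
          have hid2 : mEnd F a b p.1 p.2 = p.2 := mEnd_id _ _ _ _ _ h2.1 h2.2
          rw [hid2, hFc p.2 h2.1 h2.2]
          exact ⟨hne, hcmp⟩
  -- injectivity
  have hinj : Set.InjOn (theta F a b) (D : Set (Fin ℓ × Fin ℓ)) := by
    intro p hp q hq hpq
    simp only [hD, Finset.coe_insert, Set.mem_insert_iff, Finset.mem_coe] at hp hq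
    -- handle diagonal elements first
    rcases hp with rfl | rfl | hp
    · rcases hq with rfl | rfl | hq
      · rfl
      · rw [htheta_ab, htheta_ba] at hpq; exact hpq
      · exfalso
        have hnd := not_diag_of_mem hinc hq
        rw [htheta_ab] at hpq
        have hθ : theta F a b q = (mEnd F a b q.2 q.1, mEnd F a b q.1 q.2) := by
          unfold theta; rw [if_neg hnd]
        rw [hθ] at hpq
        by_cases h1 : q.1 = a ∨ q.1 = b
        · have h2 : ¬(q.2 = a ∨ q.2 = b) := fun h => hnd ⟨h1, h⟩
          push_neg at h2
          have hid : mEnd F a b q.1 q.2 = q.2 := mEnd_id _ _ _ _ _ h2.1 h2.2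
          rw [hid] at hpq
          exact h2.2 (congrArg Prod.snd hpq).symm
        · push_neg at h1
          have hid : mEnd F a b q.2 q.1 = q.1 := mEnd_id _ _ _ _ _ h1.1 h1.2
          rw [hid] at hpq
          exact h1.1 (congrArg Prod.fst hpq).symm
    · rcases hq with rfl | rfl | hq
      · rw [htheta_ab, htheta_ba] at hpq; exact hpq.symm ▸ rfl
      · rfl
      · exfalso
        have hnd := not_diag_of_mem hinc hq
        rw [htheta_ba] at hpq
        have hθ : theta F a b q = (mEnd F a b q.2 q.1, mEnd F a b q.1 q.2) := by
          unfold theta; rw [if_neg hnd]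
        rw [hθ] at hpq
        by_cases h1 : q.1 = a ∨ q.1 = b
        · have h2 : ¬(q.2 = a ∨ q.2 = b) := fun h => hnd ⟨h1, h⟩
          push_neg at h2
          have hid : mEnd F a b q.1 q.2 = q.2 := mEnd_id _ _ _ _ _ h2.1 h2.2
          rw [hid] at hpq
          exact h2.1 (congrArg Prod.snd hpq).symm
        · push_neg at h1
          have hid : mEnd F a b q.2 q.1 = q.1 := mEnd_id _ _ _ _ _ h1.1 h1.2
          rw [hid] at hpq
          exact h1.2 (congrArg Prod.fst hpq).symm
    · rcases hq with rfl | rfl | hq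
      · exfalso
        have hnd := not_diag_of_mem hinc hp
        rw [htheta_ab] at hpq
        have hθ : theta F a b p = (mEnd F a b p.2 p.1, mEnd F a b p.1 p.2) := by
          unfold theta; rw [if_neg hnd]
        rw [hθ] at hpq
        by_cases h1 : p.1 = a ∨ p.1 = b
        · have h2 : ¬(p.2 = a ∨ p.2 = b) := fun h => hnd ⟨h1, h⟩
          push_neg at h2
          have hid : mEnd F a b p.1 p.2 = p.2 := mEnd_id _ _ _ _ _ h2.1 h2.2
          rw [hid] at hpq
          exact h2.2 (congrArg Prod.snd hpq)
        · push_neg at h1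
          have hid : mEnd F a b p.2 p.1 = p.1 := mEnd_id _ _ _ _ _ h1.1 h1.2
          rw [hid] at hpq
          exact h1.1 (congrArg Prod.fst hpq)
      · exfalso
        have hnd := not_diag_of_mem hinc hp
        rw [htheta_ba] at hpq
        have hθ : theta F a b p = (mEnd F a b p.2 p.1, mEnd F a b p.1 p.2) := by
          unfold theta; rw [if_neg hnd]
        rw [hθ] at hpq
        by_cases h1 : p.1 = a ∨ p.1 = b
        · have h2 : ¬(p.2 = a ∨ p.2 = b) := fun h => hnd ⟨h1, h⟩
          push_neg at h2
          have hid : mEnd F a b p.1 p.2 = p.2 := mEnd_id _ _ _ _ _ h2.1 h2.2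
          rw [hid] at hpq
          exact h2.1 (congrArg Prod.snd hpq)
        · push_neg at h1
          have hid : mEnd F a b p.2 p.1 = p.1 := mEnd_id _ _ _ _ _ h1.1 h1.2
          rw [hid] at hpq
          exact h1.2 (congrArg Prod.fst hpq)
      · -- both p and q in eset F
        have hndp := not_diag_of_mem hinc hp
        have hndq := not_diag_of_mem hinc hq
        have hθp : theta F a b p = (mEnd F a b p.2 p.1, mEnd F a b p.1 p.2) := by
          unfold theta; rw [if_neg hndp]
        have hθq : theta F a b q = (mEnd F a b q.2 q.1, mEnd F a b q.1 q.2) := by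
          unfold theta; rw [if_neg hndq]
        rw [hθp, hθq] at hpq
        rw [mem_eset] at hp hq
        obtain ⟨hpne, hpcmp⟩ := hp
        obtain ⟨hqne, hqcmp⟩ := hq
        have h1 := congrArg Prod.fst hpq
        have h2 := congrArg Prod.snd hpq
        simp only at h1 h2
        by_cases hP1 : p.1 = a ∨ p.1 = b
        · -- p.2 not in {a,b}
          have hP2 : ¬(p.2 = a ∨ p.2 = b) := fun h => hndp ⟨hP1, h⟩
          push_neg at hP2
          have hidp : mEnd F a b p.1 p.2 = p.2 := mEnd_id _ _ _ _ _ hP2.1 hP2.2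
          rw [hidp] at h2
          by_cases hQ1 : q.1 = a ∨ q.1 = b
          · have hQ2 : ¬(q.2 = a ∨ q.2 = b) := fun h => hndq ⟨hQ1, h⟩
            push_neg at hQ2
            have hidq : mEnd F a b q.1 q.2 = q.2 := mEnd_id _ _ _ _ _ hQ2.1 hQ2.2
            rw [hidq] at h2
            -- h2 : p.2 = q.2, h1 : mEnd p.2 p.1 = mEnd q.2 q.1
            rw [← h2] at h1
            by_cases hfst : p.1 = q.1
            · exact Prod.ext hfst h2
            · exfalso
              exact mEnd_ne F a b p.2 p.1 q.1 hab hP1 hQ1 hfst hpcmp.symm'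
                (h2 ▸ hqcmp.symm') h1
          · exfalso
            push_neg at hQ1
            have hidq : mEnd F a b q.2 q.1 = q.1 := mEnd_id _ _ _ _ _ hQ1.1 hQ1.2
            rw [hidq] at h1
            rcases mEnd_S F a b p.2 p.1 hP1 with h | h <;> rw [h] at h1
            · exact hQ1.1 h1.symm
            · exact hQ1.2 h1.symm
        · push_neg at hP1
          have hidp : mEnd F a b p.2 p.1 = p.1 := mEnd_id _ _ _ _ _ hP1.1 hP1.2
          rw [hidp] at h1
          by_cases hQ1 : q.1 = a ∨ q.1 = b
          · exfalso
            rcases mEnd_S F a b q.2 q.1 hQ1 with h | h <;> rw [h] at h1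
            · exact hP1.1 h1
            · exact hP1.2 h1
          · push_neg at hQ1
            have hidq : mEnd F a b q.2 q.1 = q.1 := mEnd_id _ _ _ _ _ hQ1.1 hQ1.2
            rw [hidq] at h1
            -- h1 : p.1 = q.1
            by_cases hP2 : p.2 = a ∨ p.2 = b
            · by_cases hQ2 : q.2 = a ∨ q.2 = b
              · rw [← h1] at h2
                by_cases hsnd : p.2 = q.2
                · exact Prod.ext h1 hsnd
                · exfalso
                  exact mEnd_ne F a b p.1 p.2 q.2 hab hP2 hQ2 hsnd hpcmp
                    (h1 ▸ hqcmp) h2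
              · exfalso
                push_neg at hQ2
                have hidq2 : mEnd F a b q.1 q.2 = q.2 := mEnd_id _ _ _ _ _ hQ2.1 hQ2.2
                rw [hidq2] at h2
                rcases mEnd_S F a b p.1 p.2 hP2 with h | h <;> rw [h] at h2
                · exact hQ2.1 h2.symm
                · exact hQ2.2 h2.symm
            · push_neg at hP2
              have hidp2 : mEnd F a b p.1 p.2 = p.2 := mEnd_id _ _ _ _ _ hP2.1 hP2.2
              rw [hidp2] at h2
              by_cases hQ2 : q.2 = a ∨ q.2 = b
              · exfalso
                rcases mEnd_S F a b q.1 q.2 hQ2 with h | h <;> rw [h] at h2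
                · exact hP2.1 h2
                · exact hP2.2 h2
              · push_neg at hQ2
                have hidq2 : mEnd F a b q.1 q.2 = q.2 := mEnd_id _ _ _ _ _ hQ2.1 hQ2.2
                rw [hidq2] at h2
                exact Prod.ext h1 h2
  have hle : D.card ≤ (eset F').card :=
    Finset.card_le_card_of_injOn (theta F a b) hmaps hinj
  rw [hcard] at hle
  exact hle

end Step

end CCProof


namespace CompCircuit

variable {n ℓ : ℕ}

lemma stateAfter_succ (C : CompCircuit n ℓ) (x : Fin n → Bool) {t : ℕ}
    (ht : t < C.gates.length) :
    C.stateAfter x (t + 1) = applyGate (C.gates.get ⟨t, ht⟩) (C.stateAfter x t) := by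
  unfold stateAfter
  rw [List.take_succ, List.foldl_append]
  have : C.gates[t]? = some (C.gates.get ⟨t, ht⟩) := by
    rw [List.getElem?_eq_getElem ht]; rfl
  rw [this]
  rfl

/-- Run is the fold of the remaining gates from the state after `t` gates. -/
lemma run_eq_foldl_drop (C : CompCircuit n ℓ) (x : Fin n → Bool) (t : ℕ) :
    C.run x = (C.gates.drop t).foldl (fun v g => applyGate g v) (C.stateAfter x t) := by
  unfold run stateAfter
  rw [← List.foldl_append, List.take_append_drop]

/-- A type-1 useless gate acts as the identity. -/
lemma applyGate_id {g : Fin ℓ × Fin ℓ} {v : Fin ℓ → Bool}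
    (h : ¬(v g.1 = true ∧ v g.2 = false)) : applyGate g v = v := by
  funext w
  unfold applyGate
  split_ifs with h1 h2
  · subst h1
    cases hb : v g.2
    · cases ha : v g.1
      · simp
      · exact absurd ⟨ha, hb⟩ h
    · simp [hb]
  · subst h2
    cases hb : v g.2
    · cases ha : v g.1
      · simp [ha]
      · exact absurd ⟨ha, hb⟩ h
    · simp
  · rfl

/-- A type-2 useless gate acts as the swap of its two wires. -/
lemma applyGate_swap {g : Fin ℓ × Fin ℓ} {v : Fin ℓ → Bool}
    (h : ¬(v g.1 = false ∧ v g.2 = true)) :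
    applyGate g v = fun w => v (Equiv.swap g.1 g.2 w) := by
  funext w
  unfold applyGate
  split_ifs with h1 h2
  · subst h1
    rw [Equiv.swap_apply_left]
    cases ha : v g.1
    · cases hb : v g.2
      · simp
      · exact absurd ⟨ha, hb⟩ h
    · simp
  · subst h2
    rw [Equiv.swap_apply_right]
    cases ha : v g.1
    · cases hb : v g.2
      · simp
      · exact absurd ⟨ha, hb⟩ h
    · simp
  · rw [Equiv.swap_apply_of_ne_of_ne h1 h2]

/-- Folding gates over a renamed start state equals folding renamed gates, renamed. -/
lemma foldl_rename (σ : Fin ℓ ≃ Fin ℓ) :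
    ∀ (gs : List (Fin ℓ × Fin ℓ)) (v : Fin ℓ → Bool),
    gs.foldl (fun v g => applyGate g v) (fun w => v (σ w))
      = fun w => ((gs.map (fun g => (σ g.1, σ g.2))).foldl
          (fun v g => applyGate g v) v) (σ w) := by
  intro gs
  induction gs with
  | nil => intro v; rfl
  | cons g gs ih =>
      intro v
      have hstep : applyGate g (fun w => v (σ w))
          = fun w => (applyGate (σ g.1, σ g.2) v) (σ w) := by
        funext w
        unfold applyGate
        simp only [EmbeddingLike.apply_eq_iff_eq]
      simp only [List.foldl_cons, List.map_cons]
      rw [hstep, ih (applyGate (σ g.1, σ g.2) v)]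

end CompCircuit

namespace CompCircuit

variable {n ℓ : ℕ}

open CCProof

/-- The function-valued state of the wires after `t` gates. -/
def wstate (C : CompCircuit n ℓ) (t : ℕ) : Fin ℓ → (Fin n → Bool) → Bool :=
  fun w x => C.stateAfter x t w

lemma length_le_of_no_useless (C : CompCircuit n ℓ)
    (h : ∀ i : Fin C.gates.length, ¬ C.UselessAt i) :
    C.gates.length ≤ ℓ * (ℓ - 1) / 2 := by
  classical
  have hstep : ∀ t (ht : t < C.gates.length),
      phi (C.wstate t) + 2 ≤ phi (C.wstate (t + 1)) := by
    intro t ht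
    set i : Fin C.gates.length := ⟨t, ht⟩ with hi
    set g : Fin ℓ × Fin ℓ := C.gates.get i with hg
    have hgmem : g ∈ C.gates := List.get_mem _ _
    have hab : g.1 ≠ g.2 := C.distinct g hgmem
    have hu := h i
    unfold UselessAt at hu
    push_neg at hu
    obtain ⟨h1, h2⟩ := hu
    unfold Type1UselessAt at h1
    unfold Type2UselessAt at h2
    push_neg at h1 h2
    obtain ⟨x1, hx1⟩ := h1
    obtain ⟨x2, hx2⟩ := h2
    unfold gateIn at hx1 hx2
    rw [Prod.mk.injEq] at hx1 hx2
    have hinc : ¬ Cmp (C.wstate t g.1) (C.wstate t g.2) := by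
      rintro (hc | hc)
      · have e1 := hc x1 hx1.1
        have e2 : C.wstate t g.2 x1 = false := hx1.2
        rw [e1] at e2
        simp at e2
      · have e1 := hc x2 hx2.2
        have e2 : C.wstate t g.1 x2 = false := hx2.1
        rw [e1] at e2
        simp at e2
    have hnext : ∀ w, C.wstate (t + 1) w = fun x => applyGate g (C.stateAfter x t) w := by
      intro w
      funext x
      show C.stateAfter x (t + 1) w = _
      rw [C.stateAfter_succ x ht]
    have hFa : C.wstate (t + 1) g.1 = fand (C.wstate t g.1) (C.wstate t g.2) := by
      rw [hnext g.1]
      funext x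
      unfold applyGate fand
      rw [if_pos rfl]
      rfl
    have hFb : C.wstate (t + 1) g.2 = for' (C.wstate t g.1) (C.wstate t g.2) := by
      rw [hnext g.2]
      funext x
      unfold applyGate for'
      rw [if_neg hab.symm, if_pos rfl]
      rfl
    have hFc : ∀ c, c ≠ g.1 → c ≠ g.2 → C.wstate (t + 1) c = C.wstate t c := by
      intro c hc1 hc2
      rw [hnext c]
      funext x
      unfold applyGate
      rw [if_neg hc1, if_neg hc2]
      rfl
    exact phi_step (C.wstate t) (C.wstate (t + 1)) g.1 g.2 hab hFa hFb hFc hinc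
  have hmono : ∀ t, t ≤ C.gates.length → 2 * t ≤ phi (C.wstate t) := by
    intro t
    induction t with
    | zero => intro _; exact Nat.zero_le _
    | succ k ih =>
        intro hk
        have hk' : k < C.gates.length := hk
        have h1 := ih (Nat.le_of_lt hk')
        have h2 := hstep k hk'
        omega
  have h1 := hmono C.gates.length le_rfl
  have h2 := phi_le (C.wstate C.gates.length)
  rw [Nat.le_div_iff_mul_le (by norm_num : 0 < 2)]
  omega

/-- Removing a type-1 useless gate. -/
lemma remove_type1 (C : CompCircuit n ℓ) (i : Fin C.gates.length)
    (h : C.Type1UselessAt i) :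
    ∃ C' : CompCircuit n ℓ, C'.gates.length + 1 = C.gates.length ∧
      ∀ x, C'.eval x = C.eval x := by
  refine ⟨⟨C.label, C.gates.eraseIdx i, fun g hg => C.distinct g (List.eraseIdx_subset hg),
    C.out⟩, ?_, ?_⟩
  · show (C.gates.eraseIdx i).length + 1 = C.gates.length
    rw [List.length_eraseIdx, if_pos i.isLt]
    have := i.isLt
    omega
  · intro x
    have hid : applyGate (C.gates.get i) (C.stateAfter x i) = C.stateAfter x i := by
      apply applyGate_id
      intro hcon
      exact h x (by unfold gateIn; rw [hcon.1, hcon.2])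
    have hrun : C.run x = (C.gates.drop (i + 1)).foldl (fun v g => applyGate g v)
        (C.stateAfter x i) := by
      rw [run_eq_foldl_drop C x i, List.drop_eq_getElem_cons i.isLt, List.foldl_cons]
      exact congrArg (fun S => List.foldl (fun v g => CompCircuit.applyGate g v) S
        (List.drop (↑i + 1) C.gates)) hid
    have hL : (C.gates.eraseIdx i).foldl (fun v g => applyGate g v) (C.init x)
        = (C.gates.drop (i + 1)).foldl (fun v g => applyGate g v) (C.stateAfter x i) := by
      rw [List.eraseIdx_eq_take_drop_succ, List.foldl_append]
      rfl
    show ((C.gates.eraseIdx i).foldl (fun v g => applyGate g v) (C.init x)) C.out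
        = C.run x C.out
    rw [hL, hrun]

/-- Removing a type-2 useless gate. -/
lemma remove_type2 (C : CompCircuit n ℓ) (i : Fin C.gates.length)
    (h : C.Type2UselessAt i) :
    ∃ C' : CompCircuit n ℓ, C'.gates.length + 1 = C.gates.length ∧
      ∀ x, C'.eval x = C.eval x := by
  classical
  set g : Fin ℓ × Fin ℓ := C.gates.get i with hgdef
  set σ : Fin ℓ ≃ Fin ℓ := Equiv.swap g.1 g.2 with hσ
  have hdist : ∀ p ∈ C.gates.take i ++ (C.gates.drop (i + 1)).map
      (fun q => (σ q.1, σ q.2)), p.1 ≠ p.2 := by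
    intro p hp
    rw [List.mem_append] at hp
    rcases hp with hp | hp
    · exact C.distinct p (List.take_subset _ _ hp)
    · rw [List.mem_map] at hp
      obtain ⟨q, hq, rfl⟩ := hp
      have := C.distinct q (List.drop_subset _ _ hq)
      simp only [ne_eq, EmbeddingLike.apply_eq_iff_eq]
      exact this
  refine ⟨⟨C.label, C.gates.take i ++ (C.gates.drop (i + 1)).map (fun q => (σ q.1, σ q.2)),
    hdist, σ C.out⟩, ?_, ?_⟩
  · show (C.gates.take i ++ _).length + 1 = C.gates.length
    rw [List.length_append, List.length_map, List.length_take, List.length_drop]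
    have := i.isLt
    omega
  · intro x
    have hswap : applyGate g (C.stateAfter x i)
        = fun w => (C.stateAfter x i) (σ w) := by
      apply applyGate_swap
      intro hcon
      exact h x (by unfold gateIn; rw [hcon.1, hcon.2])
    have hrun : C.run x = (C.gates.drop (i + 1)).foldl (fun v g => applyGate g v)
        (fun w => (C.stateAfter x i) (σ w)) := by
      rw [run_eq_foldl_drop C x i, List.drop_eq_getElem_cons i.isLt, List.foldl_cons]
      rw [← hswap]
      rfl
    rw [foldl_rename σ (C.gates.drop (i + 1)) (C.stateAfter x i)] at hrun
    have hL : (C.gates.take i ++ (C.gates.drop (i + 1)).map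
          (fun q => (σ q.1, σ q.2))).foldl (fun v g => applyGate g v) (C.init x)
        = ((C.gates.drop (i + 1)).map (fun q => (σ q.1, σ q.2))).foldl
          (fun v g => applyGate g v) (C.stateAfter x i) := by
      rw [List.foldl_append]
      rfl
    show ((C.gates.take i ++ (C.gates.drop (i + 1)).map (fun q => (σ q.1, σ q.2))).foldl
        (fun v g => applyGate g v) (C.init x)) (σ C.out) = C.run x C.out
    rw [hL, hrun]

end CompCircuit

theorem exists_equivalent_small_circuit' {n ℓ : ℕ} :
    ∀ (k : ℕ) (C : CompCircuit n ℓ), C.gates.length = k →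
    ∃ C' : CompCircuit n ℓ, C'.gates.length ≤ ℓ * (ℓ - 1) / 2 ∧
      ∀ x : Fin n → Bool, C'.eval x = C.eval x := by
  intro k
  induction k using Nat.strong_induction_on with
  | _ k ih =>
    intro C hC
    by_cases h : ∃ i : Fin C.gates.length, C.UselessAt i
    · obtain ⟨i, hi⟩ := h
      have hrem : ∃ C'' : CompCircuit n ℓ, C''.gates.length + 1 = C.gates.length ∧
          ∀ x, C''.eval x = C.eval x := by
        rcases hi with h1 | h2
        · exact C.remove_type1 i h1
        · exact C.remove_type2 i h2
      obtain ⟨C'', hlen, heq⟩ := hrem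
      obtain ⟨C', h1', h2'⟩ := ih C''.gates.length (by omega) C'' rfl
      exact ⟨C', h1', fun x => (h2' x).trans (heq x)⟩
    · push_neg at h
      exact ⟨C, C.length_le_of_no_useless h, fun _ => rfl⟩


/-- Every comparator circuit with `ℓ > 0` wires has an equivalent comparator
circuit (computing the same Boolean function) with `ℓ` wires and at most `ℓ·(ℓ−1)/2` gates. -/
theorem exists_equivalent_small_circuit {n ℓ : ℕ} (hℓ : 0 < ℓ) (C : CompCircuit n ℓ) :
    ∃ C' : CompCircuit n ℓ, C'.gates.length ≤ ℓ * (ℓ - 1) / 2 ∧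
      ∀ x : Fin n → Bool, C'.eval x = C.eval x := 
  exists_equivalent_small_circuit' C.gates.length C rfl
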